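/- Theorem (the k-means step produces exactly r inlier clusters): let {1,…,n} = I ∪ O with |O| = m, let Z be the membership matrix of a partition of {1,…,n} into r clusters each of size n/r such that every cluster contains at least one index from I, let ν ∈ ℝ^{r×r} satisfy νᵀν = (r/n)·I_r, and set V = Zν. Let V̂ ∈ ℝ^{n×r} satisfy V̂ᵀV̂ = I_r, and suppose there exists an orthogonal matrix R ∈ ℝ^{r×r} with ‖VR − V̂‖_F ≤ u. If 3u² + 2mr/n < 1, then every minimizer M* of ‖V̂ − M‖_F² over matrices M ∈ ℝ^{n×r} with at most r distinct rows has the property that the submatrix M*_I of rows indexed by I has exactly r distinct rows. -/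

import Mathlib

open Matrix

/-- Squared Frobenius norm `‖M‖_F² = Σ_{i,j} M_{ij}²`. -/
def frobSq {n d : ℕ} (M : Matrix (Fin n) (Fin d) ℝ) : ℝ := ∑ i, ∑ j, (M i j) ^ 2

/-- Frobenius norm. -/
noncomputable def frobNorm {n d : ℕ} (M : Matrix (Fin n) (Fin d) ℝ) : ℝ :=
  Real.sqrt (frobSq M)

/-- The number of distinct rows of a matrix. -/
noncomputable def nDistinctRows {n d : ℕ} (M : Matrix (Fin n) (Fin d) ℝ) : ℕ :=
  (Finset.univ.image fun i => M i).card

set_option maxHeartbeats 1000000 in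
/-- the k-means step produces exactly `r` inlier clusters: if
`{1,…,n} = I ∪ O` with `|O| = m`, `Z` is the membership matrix of a partition into `r`
clusters of size `n/r` each meeting `I`, `νᵀν = (r/n)·I_r`, `V = Zν`, `V̂ᵀV̂ = I_r`, `R` is
orthogonal with `‖VR − V̂‖_F ≤ u`, and `3u² + 2mr/n < 1`, then every minimizer `M*` of
`‖V̂ − M‖_F²` over matrices with at most `r` distinct rows has exactly `r` distinct rows
among the rows indexed by `I`. -/
theorem stmt_9 (n r m : ℕ) (hdvd : r ∣ n)
    (I O : Finset (Fin n)) (hIO : I ∪ O = Finset.univ) (hdisj : Disjoint I O)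
    (hm : O.card = m)
    (z : Fin n → Fin r)
    (hsize : ∀ k : Fin r, (Finset.univ.filter fun i => z i = k).card = n / r)
    (hmeet : ∀ k : Fin r, ∃ i ∈ I, z i = k)
    (Z : Matrix (Fin n) (Fin r) ℝ)
    (hZ : Z = Matrix.of (fun i k => if z i = k then (1 : ℝ) else 0))
    (ν : Matrix (Fin r) (Fin r) ℝ) (hν : νᵀ * ν = ((r : ℝ) / n) • (1 : Matrix (Fin r) (Fin r) ℝ))
    (V : Matrix (Fin n) (Fin r) ℝ) (hV : V = Z * ν)
    (Vh : Matrix (Fin n) (Fin r) ℝ) (hVh : Vhᵀ * Vh = 1)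
    (R : Matrix (Fin r) (Fin r) ℝ) (hR : Rᵀ * R = 1)
    (u : ℝ) (hu : frobNorm (V * R - Vh) ≤ u)
    (hcond : 3 * u ^ 2 + 2 * (m : ℝ) * r / n < 1)
    (Mstar : Matrix (Fin n) (Fin r) ℝ)
    (hMr : nDistinctRows Mstar ≤ r)
    (hMopt : ∀ M : Matrix (Fin n) (Fin r) ℝ, nDistinctRows M ≤ r →
      frobSq (Vh - Mstar) ≤ frobSq (Vh - M)) :
    (I.image fun i => Mstar i).card = r := by
  classical
  -- trivial case r = 0
  rcases Nat.eq_zero_or_pos r with hr0 | hr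
  · subst hr0
    have hn0 : n = 0 := zero_dvd_iff.mp hdvd
    subst hn0
    simp [Finset.eq_empty_of_isEmpty I]
  -- n > 0
  have hn : 0 < n := by
    by_contra h
    have hn0 : n = 0 := Nat.eq_zero_of_not_pos h
    subst hn0
    have h1 := congrFun (congrFun hVh ⟨0, hr⟩) ⟨0, hr⟩
    simp [Matrix.mul_apply, Matrix.one_apply] at h1
  have hcpos : 0 < (r : ℝ) / n :=
    div_pos (by exact_mod_cast hr) (by exact_mod_cast hn)
  have hfrob_nonneg : ∀ (A : Matrix (Fin n) (Fin r) ℝ), 0 ≤ frobSq A := fun A =>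
    Finset.sum_nonneg fun i _ => Finset.sum_nonneg fun j _ => sq_nonneg _
  -- frobSq of the error matrix is at most u²
  have hE : frobSq (Vh - V * R) ≤ u ^ 2 := by
    have h1 : frobSq (V * R - Vh) ≤ u ^ 2 := by
      have h2 : frobSq (V * R - Vh) = frobNorm (V * R - Vh) ^ 2 :=
        (Real.sq_sqrt (hfrob_nonneg _)).symm
      rw [h2]
      exact pow_le_pow_left₀ (Real.sqrt_nonneg _) hu 2
    calc frobSq (Vh - V * R) = frobSq (V * R - Vh) := by
          unfold frobSq
          refine Finset.sum_congr rfl fun i _ => Finset.sum_congr rfl fun j _ => ?_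
          simp only [Matrix.sub_apply]; ring
      _ ≤ u ^ 2 := h1
  -- ν νᵀ = (r/n) I
  have hνν : ν * νᵀ = ((r : ℝ) / n) • 1 := by
    have h2 : ((((r : ℝ) / n))⁻¹ • νᵀ) * ν = 1 := by
      rw [Matrix.smul_mul, hν, smul_smul, inv_mul_cancel₀ (ne_of_gt hcpos), one_smul]
    have h3 : ν * ((((r : ℝ) / n))⁻¹ • νᵀ) = 1 := mul_eq_one_comm.mp h2
    calc ν * νᵀ = ((r : ℝ) / n) • (((r : ℝ) / n)⁻¹ • (ν * νᵀ)) := by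
          rw [smul_smul, mul_inv_cancel₀ (ne_of_gt hcpos), one_smul]
      _ = ((r : ℝ) / n) • (ν * ((((r : ℝ) / n))⁻¹ • νᵀ)) := by rw [Matrix.mul_smul]
      _ = ((r : ℝ) / n) • 1 := by rw [h3]
  have hRR : R * Rᵀ = 1 := mul_eq_one_comm.mp hR
  -- rows of V*R
  have hWentry : ∀ i j, (V * R) i j = (ν * R) (z i) j := by
    intro i j
    rw [hV, Matrix.mul_assoc]
    simp [Matrix.mul_apply, hZ, ite_mul, Finset.sum_ite_eq]
  have hWnorm : ∀ i, (∑ j, ((V * R) i j) ^ 2) = (r : ℝ) / n := by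
    intro i
    have h4 : (ν * R) * (ν * R)ᵀ = ((r : ℝ) / n) • 1 := by
      rw [Matrix.transpose_mul, Matrix.mul_assoc, ← Matrix.mul_assoc R, hRR, Matrix.one_mul, hνν]
    have h5 : (∑ j, ((ν * R) (z i) j) ^ 2) = ((ν * R) * (ν * R)ᵀ) (z i) (z i) := by
      rw [Matrix.mul_apply]
      exact Finset.sum_congr rfl fun j _ => by rw [Matrix.transpose_apply, sq]
    calc (∑ j, ((V * R) i j) ^ 2) = ∑ j, ((ν * R) (z i) j) ^ 2 := by
          exact Finset.sum_congr rfl fun j _ => by rw [hWentry]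
      _ = ((ν * R) * (ν * R)ᵀ) (z i) (z i) := h5
      _ = (r : ℝ) / n := by rw [h4]; simp [Matrix.smul_apply, Matrix.one_apply]
  -- V*R has at most r distinct rows
  have hWrows : nDistinctRows (V * R) ≤ r := by
    unfold nDistinctRows
    have hsub : (Finset.univ.image fun i => (V * R) i)
        ⊆ Finset.univ.image (fun k : Fin r => (ν * R) k) := by
      intro x hx
      simp only [Finset.mem_image] at hx ⊢
      obtain ⟨i, _, rfl⟩ := hx
      exact ⟨z i, Finset.mem_univ _, (funext fun j => (hWentry i j)).symm⟩
    calc (Finset.univ.image fun i => (V * R) i).card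
        ≤ (Finset.univ.image fun k : Fin r => (ν * R) k).card := Finset.card_le_card hsub
      _ ≤ (Finset.univ : Finset (Fin r)).card := Finset.card_image_le
      _ = r := by simp
  have hOpt : frobSq (Vh - Mstar) ≤ u ^ 2 := le_trans (hMopt (V * R) hWrows) hE
  -- the image over I has at most r elements
  have hle : (I.image fun i => Mstar i).card ≤ r := by
    calc (I.image fun i => Mstar i).card
        ≤ (Finset.univ.image fun i => Mstar i).card :=
          Finset.card_le_card (Finset.image_subset_image (Finset.subset_univ I))
      _ ≤ r := hMr
  by_contra hne
  have hlt : (I.image fun i => Mstar i).card < r := lt_of_le_of_ne hle hne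
  -- find a unit-ish vector orthogonal to all rows Mstar i, i ∈ I
  set e := (WithLp.equiv 2 (Fin r → ℝ)).symm with he
  set T : Finset (EuclideanSpace ℝ (Fin r)) := I.image (fun i => e (Mstar i)) with hT
  have hTcard : T.card < r := by
    have h1 : T = (I.image fun i => Mstar i).image e := by
      rw [hT, Finset.image_image]; rfl
    rw [h1, Finset.card_image_of_injective _ (Equiv.injective e)]
    exact hlt
  set U : Submodule ℝ (EuclideanSpace ℝ (Fin r)) := Submodule.span ℝ (T : Set _) with hU
  have hUne : U ≠ ⊤ := by
    intro htop
    have h1 : Module.finrank ℝ U ≤ T.card := finrank_span_finset_le_card T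
    rw [htop, finrank_top, finrank_euclideanSpace_fin] at h1
    omega
  have hbot : Uᗮ ≠ ⊥ := by
    rw [Ne, Submodule.orthogonal_eq_bot_iff]
    exact hUne
  obtain ⟨w, hwU, hw0⟩ := Submodule.exists_mem_ne_zero_of_ne_bot hbot
  set w' : Fin r → ℝ := WithLp.equiv 2 (Fin r → ℝ) w with hw'
  have horth : ∀ i ∈ I, (∑ j, Mstar i j * w' j) = 0 := by
    intro i hi
    have hmem : e (Mstar i) ∈ U :=
      Submodule.subset_span (by
        rw [hT]
        exact Finset.mem_coe.mpr (Finset.mem_image.mpr ⟨i, hi, rfl⟩))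
    have h1 := (Submodule.mem_orthogonal U w).mp hwU _ hmem
    have h2 : ∑ x, w.ofLp x * Mstar i x = 0 := by
      simpa [PiLp.inner_apply, RCLike.inner_apply, he] using h1
    rw [← h2]
    exact Finset.sum_congr rfl fun j _ => mul_comm _ _
  set s : ℝ := ∑ j, (w' j) ^ 2 with hs_def
  have hs_nonneg : 0 ≤ s := Finset.sum_nonneg fun j _ => sq_nonneg _
  have hs : 0 < s := by
    rcases lt_or_eq_of_le hs_nonneg with h | h
    · exact h
    exfalso
    apply hw0
    have hall : ∀ j, w' j = 0 := by
      intro j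
      have h1 := (Finset.sum_eq_zero_iff_of_nonneg (fun j _ => sq_nonneg (w' j))).mp h.symm
        j (Finset.mem_univ j)
      exact pow_eq_zero_iff (n := 2) (by norm_num) |>.mp h1
    have hw'0 : w' = 0 := funext hall
    have : w = e w' := by rw [hw', he]; exact (Equiv.symm_apply_apply _ _).symm
    rw [this, hw'0]
    rfl
  -- key identity : ∑ i, (Vh w)_i² = s
  have hVhE : ∀ j j', (∑ i, Vh i j * Vh i j') = if j = j' then (1 : ℝ) else 0 := by
    intro j j'
    have h1 := congrFun (congrFun hVh j) j'
    simpa [Matrix.mul_apply, Matrix.transpose_apply, Matrix.one_apply] using h1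
  set g : Fin n → ℝ := fun i => ∑ j, Vh i j * w' j with hg
  have hTot : (∑ i, (g i) ^ 2) = s := by
    have h1 : ∀ i : Fin n, (g i) ^ 2 = ∑ j, ∑ k, (Vh i j * w' j) * (Vh i k * w' k) := by
      intro i
      rw [hg, sq, Finset.sum_mul_sum]
    calc (∑ i, (g i) ^ 2)
        = ∑ i, ∑ j, ∑ k, (Vh i j * w' j) * (Vh i k * w' k) :=
          Finset.sum_congr rfl fun i _ => h1 i
      _ = ∑ j, ∑ k, (w' j * w' k) * ∑ i, Vh i j * Vh i k := by
          rw [Finset.sum_comm]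
          refine Finset.sum_congr rfl fun j _ => ?_
          rw [Finset.sum_comm]
          refine Finset.sum_congr rfl fun k _ => ?_
          rw [Finset.mul_sum]
          exact Finset.sum_congr rfl fun i _ => by ring
      _ = ∑ j, w' j * w' j := by
          refine Finset.sum_congr rfl fun j _ => ?_
          rw [Finset.sum_congr rfl fun k (_ : k ∈ Finset.univ) => by rw [hVhE j k]]
          simp [mul_ite, Finset.sum_ite_eq]
      _ = s := by rw [hs_def]; exact Finset.sum_congr rfl fun j _ => (pow_two (w' j)).symm
  -- bound on inlier part
  have hIbound : (∑ i ∈ I, (g i) ^ 2) ≤ u ^ 2 * s := by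
    have h1 : ∀ i ∈ I, (g i) ^ 2 ≤ (∑ j, (Vh i j - Mstar i j) ^ 2) * s := by
      intro i hi
      have h2 : g i = ∑ j, (Vh i j - Mstar i j) * w' j := by
        have h3 : (∑ j, (Vh i j - Mstar i j) * w' j)
            = (∑ j, Vh i j * w' j) - ∑ j, Mstar i j * w' j := by
          rw [← Finset.sum_sub_distrib]
          exact Finset.sum_congr rfl fun j _ => by ring
        rw [hg, h3, horth i hi, sub_zero]
      rw [h2, hs_def]
      exact Finset.sum_mul_sq_le_sq_mul_sq _ _ _
    calc (∑ i ∈ I, (g i) ^ 2)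
        ≤ ∑ i ∈ I, (∑ j, (Vh i j - Mstar i j) ^ 2) * s := Finset.sum_le_sum h1
      _ = (∑ i ∈ I, ∑ j, (Vh i j - Mstar i j) ^ 2) * s := (Finset.sum_mul _ _ _).symm
      _ ≤ u ^ 2 * s := by
          refine mul_le_mul_of_nonneg_right ?_ hs_nonneg
          calc (∑ i ∈ I, ∑ j, (Vh i j - Mstar i j) ^ 2)
              ≤ ∑ i, ∑ j, (Vh i j - Mstar i j) ^ 2 :=
                Finset.sum_le_sum_of_subset_of_nonneg (Finset.subset_univ I)
                  (fun i _ _ => Finset.sum_nonneg fun j _ => sq_nonneg _)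
            _ = frobSq (Vh - Mstar) := by
                unfold frobSq
                exact Finset.sum_congr rfl fun i _ => Finset.sum_congr rfl fun j _ => by
                  rw [Matrix.sub_apply]
            _ ≤ u ^ 2 := hOpt
  -- bound on outlier part
  have hObound : (∑ i ∈ O, (g i) ^ 2) ≤ (2 * ((r : ℝ) / n) * m + 2 * u ^ 2) * s := by
    have h1 : ∀ i : Fin n, (g i) ^ 2 ≤ (∑ j, (Vh i j) ^ 2) * s := by
      intro i
      rw [hg, hs_def]
      exact Finset.sum_mul_sq_le_sq_mul_sq _ _ _
    have h2 : ∀ i : Fin n, (∑ j, (Vh i j) ^ 2)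
        ≤ 2 * ((r : ℝ) / n) + 2 * ∑ j, (Vh i j - (V * R) i j) ^ 2 := by
      intro i
      calc (∑ j, (Vh i j) ^ 2)
          ≤ ∑ j, (2 * ((V * R) i j) ^ 2 + 2 * (Vh i j - (V * R) i j) ^ 2) :=
            Finset.sum_le_sum fun j _ => by nlinarith [sq_nonneg ((V * R) i j - (Vh i j - (V * R) i j))]
        _ = 2 * (∑ j, ((V * R) i j) ^ 2) + 2 * ∑ j, (Vh i j - (V * R) i j) ^ 2 := by
            rw [Finset.sum_add_distrib, Finset.mul_sum, Finset.mul_sum]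
        _ = 2 * ((r : ℝ) / n) + 2 * ∑ j, (Vh i j - (V * R) i j) ^ 2 := by rw [hWnorm i]
    have h3 : (∑ i ∈ O, (2 * ((r : ℝ) / n) + 2 * ∑ j, (Vh i j - (V * R) i j) ^ 2))
        ≤ 2 * ((r : ℝ) / n) * m + 2 * u ^ 2 := by
      rw [Finset.sum_add_distrib, Finset.sum_const, hm]
      have h4 : (∑ i ∈ O, 2 * ∑ j, (Vh i j - (V * R) i j) ^ 2) ≤ 2 * u ^ 2 := by
        rw [← Finset.mul_sum]
        have h5 : (∑ i ∈ O, ∑ j, (Vh i j - (V * R) i j) ^ 2) ≤ u ^ 2 := by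
          calc (∑ i ∈ O, ∑ j, (Vh i j - (V * R) i j) ^ 2)
              ≤ ∑ i, ∑ j, (Vh i j - (V * R) i j) ^ 2 :=
                Finset.sum_le_sum_of_subset_of_nonneg (Finset.subset_univ O)
                  (fun i _ _ => Finset.sum_nonneg fun j _ => sq_nonneg _)
            _ = frobSq (Vh - V * R) := by
                unfold frobSq
                exact Finset.sum_congr rfl fun i _ => Finset.sum_congr rfl fun j _ => by
                  rw [Matrix.sub_apply]
            _ ≤ u ^ 2 := hE
        nlinarith
      rw [nsmul_eq_mul]
      linarith [h4]
    calc (∑ i ∈ O, (g i) ^ 2)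
        ≤ ∑ i ∈ O, (2 * ((r : ℝ) / n) + 2 * ∑ j, (Vh i j - (V * R) i j) ^ 2) * s := by
          refine Finset.sum_le_sum fun i _ => ?_
          exact le_trans (h1 i) (mul_le_mul_of_nonneg_right (h2 i) hs_nonneg)
      _ = (∑ i ∈ O, (2 * ((r : ℝ) / n) + 2 * ∑ j, (Vh i j - (V * R) i j) ^ 2)) * s :=
          (Finset.sum_mul _ _ _).symm
      _ ≤ (2 * ((r : ℝ) / n) * m + 2 * u ^ 2) * s := mul_le_mul_of_nonneg_right h3 hs_nonneg
  -- combine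
  have hsplit : (∑ i, (g i) ^ 2) = (∑ i ∈ I, (g i) ^ 2) + ∑ i ∈ O, (g i) ^ 2 := by
    rw [← hIO, Finset.sum_union hdisj]
  have hfinal : s ≤ (3 * u ^ 2 + 2 * ((r : ℝ) / n) * m) * s := by
    calc s = (∑ i ∈ I, (g i) ^ 2) + ∑ i ∈ O, (g i) ^ 2 := by rw [← hTot]; exact hsplit
      _ ≤ u ^ 2 * s + (2 * ((r : ℝ) / n) * m + 2 * u ^ 2) * s := add_le_add hIbound hObound
      _ = (3 * u ^ 2 + 2 * ((r : ℝ) / n) * m) * s := by ring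
  have h7 : (1 : ℝ) ≤ 3 * u ^ 2 + 2 * ((r : ℝ) / n) * m := by
    by_contra h
    push_neg at h
    have h9 := mul_lt_mul_of_pos_right h hs
    rw [one_mul] at h9
    linarith
  have h8 : 2 * ((r : ℝ) / n) * m = 2 * (m : ℝ) * r / n := by ring
  rw [h8] at h7
  linarith
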